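/- arXiv:math/0211011 — 3 statements merged into one kernel-verified Lean document; each statement's English description precedes it below -/
import Mathlib

section
/- Every member of the interval multilinear polynomial matrix family lies in the convex hull of its vertex set: MA ⊆ convexHull ℝ (K_MA). Equivalently, for every q ∈ Q, the matrix ∑_{i=1}^N a_i(q) • A_i belongs to the convex hull (over ℝ) of the set {∑_{i=1}^N a_i(v) • A_i : v ∈ V}. -/
open Polynomial

/-- Every member of the interval multilinear polynomial matrix
family lies in the convex hull of its vertex set: `MA ⊆ convexHull ℝ K_MA`. -/
theorem MA_subset_convexHull_vertices
    (m N n : ℕ)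
    (qL qU : Fin m → ℝ) (hq : ∀ i, qL i ≤ qU i)
    (a : Fin N → (Fin m → ℝ) → ℝ)
    (ha : ∀ (i : Fin N) (k : Fin m) (q : Fin m → ℝ), ∃ c d : ℝ,
      ∀ t : ℝ, a i (Function.update q k t) = c + d * t)
    (A : Fin N → Matrix (Fin n) (Fin n) ℝ[X]) :
    {M : Matrix (Fin n) (Fin n) ℝ[X] |
        ∃ q : Fin m → ℝ, (∀ i, q i ∈ Set.Icc (qL i) (qU i)) ∧ M = ∑ i, a i q • A i}
      ⊆ convexHull ℝ
        {M : Matrix (Fin n) (Fin n) ℝ[X] |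
          ∃ q : Fin m → ℝ, (∀ i, q i = qL i ∨ q i = qU i) ∧ M = ∑ i, a i q • A i} := by
  rintro M ⟨q, hqQ, rfl⟩
  suffices H : ∀ s : Finset (Fin m), ∀ q : Fin m → ℝ,
      (∀ i, q i ∈ Set.Icc (qL i) (qU i)) →
      (∀ i, i ∉ s → q i = qL i ∨ q i = qU i) →
      (∑ i, a i q • A i) ∈ convexHull ℝ
        {M : Matrix (Fin n) (Fin n) ℝ[X] |
          ∃ v : Fin m → ℝ, (∀ i, v i = qL i ∨ v i = qU i) ∧ M = ∑ i, a i v • A i} by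
    exact H Finset.univ q hqQ (fun i hi => absurd (Finset.mem_univ i) hi)
  intro s
  induction s using Finset.induction_on with
  | empty =>
    intro q hQ hV
    exact subset_convexHull ℝ _ ⟨q, fun i => hV i (Finset.notMem_empty i), rfl⟩
  | @insert k s hk ih =>
    intro q hQ hV
    have hseg : q k ∈ segment ℝ (qL k) (qU k) := by
      rw [segment_eq_Icc (hq k)]; exact hQ k
    obtain ⟨α, β, hα, hβ, hαβ, ht⟩ := hseg
    set qA := Function.update q k (qL k) with hqA
    set qB := Function.update q k (qU k) with hqB
    have hQA : ∀ i, qA i ∈ Set.Icc (qL i) (qU i) := by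
      intro i
      rcases eq_or_ne i k with rfl | h
      · simp [hqA, Set.mem_Icc, le_refl, hq i]
      · simpa [hqA, Function.update_of_ne h] using hQ i
    have hQB : ∀ i, qB i ∈ Set.Icc (qL i) (qU i) := by
      intro i
      rcases eq_or_ne i k with rfl | h
      · simp [hqB, Set.mem_Icc, le_refl, hq i]
      · simpa [hqB, Function.update_of_ne h] using hQ i
    have hVA : ∀ i, i ∉ s → qA i = qL i ∨ qA i = qU i := by
      intro i hi
      rcases eq_or_ne i k with rfl | h
      · left; simp [hqA]
      · rw [hqA, Function.update_of_ne h]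
        exact hV i (by simp [h, hi])
    have hVB : ∀ i, i ∉ s → qB i = qL i ∨ qB i = qU i := by
      intro i hi
      rcases eq_or_ne i k with rfl | h
      · right; simp [hqB]
      · rw [hqB, Function.update_of_ne h]
        exact hV i (by simp [h, hi])
    have key : (∑ i, a i q • A i) = α • (∑ i, a i qA • A i) + β • (∑ i, a i qB • A i) := by
      rw [Finset.smul_sum, Finset.smul_sum, ← Finset.sum_add_distrib]
      refine Finset.sum_congr rfl (fun i _ => ?_)
      obtain ⟨c, d, hcd⟩ := ha i k q
      have h1 : a i q = c + d * q k := by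
        conv_lhs => rw [← Function.update_eq_self k q]
        exact hcd (q k)
      have h2 : a i qA = c + d * qL k := hcd (qL k)
      have h3 : a i qB = c + d * qU k := hcd (qU k)
      rw [smul_smul, smul_smul, ← add_smul]
      congr 1
      rw [h1, h2, h3, ← ht]
      simp only [smul_eq_mul]
      linear_combination (-c) * hαβ
    rw [key]
    exact (convex_convexHull ℝ _) (ih qA hQA hVA) (ih qB hQB hVB) hα hβ hαβ
end

section
/- Let B ∈ Matrix (Fin 2) (Fin 2) ℂ be Hermitian, and let u, r, n, K ∈ ℕ. Let R ∈ Matrix (Fin 2 × Fin u) (Fin r) ℂ and Q ∈ Matrix (Fin 2 × Fin u) (Fin n) ℂ be arbitrary, and for i = 1, …, K let ℬ_i ∈ Matrix (Fin n) (Fin r) ℂ and let P_i ∈ Matrix (Fin u) (Fin u) ℂ be Hermitian positive definite, such that for each i the Hermitian matrix Rᴴ (B ⊗ P_i) R + ℬ_iᴴ Qᴴ R + Rᴴ Q ℬ_i is negative definite (here ⊗ is the Kronecker product, so B ⊗ P_i ∈ Matrix (Fin 2 × Fin u) (Fin 2 × Fin u) ℂ, and ᴴ denotes conjugate transpose). Then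 for all nonnegative reals λ_1, …, λ_K with ∑_{i=1}^K λ_i = 1: (a) P := ∑_{i=1}^K λ_i P_i is Hermitian positive definite, and (b) for every nonzero x ∈ ℂ^r with (∑_{i=1}^K λ_i ℬ_i).mulVec x = 0, one has re(xᴴ · (Rᴴ (B ⊗ P) R).mulVec x) < 0. -/
open Matrix Kronecker

/-- A complex matrix is positive definite if it is Hermitian and
`re (xᴴ M x) > 0` for every nonzero vector `x`. -/
def IsCPosDef {ι : Type*} [Fintype ι] (M : Matrix ι ι ℂ) : Prop :=
  M.IsHermitian ∧ ∀ x : ι → ℂ, x ≠ 0 → 0 < (star x ⬝ᵥ M.mulVec x).re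

/-- A complex matrix is negative definite if `-M` is positive definite. -/
def IsCNegDef {ι : Type*} [Fintype ι] (M : Matrix ι ι ℂ) : Prop :=
  IsCPosDef (-M)

lemma kron_sum_smul {K u : ℕ} (B : Matrix (Fin 2) (Fin 2) ℂ) (c : Fin K → ℂ)
    (P : Fin K → Matrix (Fin u) (Fin u) ℂ) :
    B ⊗ₖ (∑ i, c i • P i) = ∑ i, c i • (B ⊗ₖ P i) := by
  ext ⟨a, b⟩ ⟨d, e⟩
  simp [Matrix.kroneckerMap_apply, Matrix.sum_apply, Finset.mul_sum, mul_left_comm]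

lemma exists_pos_lam {K : ℕ} (lam : Fin K → ℝ) (hlam : ∀ i, 0 ≤ lam i)
    (hsum : ∑ i, lam i = 1) : ∃ j, 0 < lam j := by
  by_contra h
  push_neg at h
  have : ∑ i, lam i = 0 := Finset.sum_eq_zero fun i _ => le_antisymm (h i) (hlam i)
  rw [hsum] at this; norm_num at this

lemma sum_mulVec' {K a b : ℕ} (A : Fin K → Matrix (Fin a) (Fin b) ℂ) (x : Fin b → ℂ) :
    (∑ i, A i).mulVec x = ∑ i, (A i).mulVec x := by
  ext j
  simp only [Matrix.mulVec, dotProduct, Matrix.sum_apply, Finset.sum_apply, Finset.sum_mul]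
  rw [Finset.sum_comm]

lemma dot_sum_smul {K a : ℕ} (A : Fin K → Matrix (Fin a) (Fin a) ℂ) (c : Fin K → ℂ)
    (x : Fin a → ℂ) :
    star x ⬝ᵥ (∑ i, c i • A i).mulVec x = ∑ i, c i * (star x ⬝ᵥ (A i).mulVec x) := by
  rw [sum_mulVec']
  simp only [Matrix.smul_mulVec, dotProduct, Finset.sum_apply, Pi.smul_apply,
    smul_eq_mul, Finset.mul_sum, mul_left_comm]
  rw [Finset.sum_comm]

/-- vertex LMI feasibility propagates to convex combinations of the
vertex coefficient matrices, restricted to the null space of the combined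
coefficient matrix (the convexity step in the proof of Theorem 2). -/
theorem convex_combination_LMI
    (u r n K : ℕ)
    (B : Matrix (Fin 2) (Fin 2) ℂ) (hB : B.IsHermitian)
    (R : Matrix (Fin 2 × Fin u) (Fin r) ℂ)
    (Q : Matrix (Fin 2 × Fin u) (Fin n) ℂ)
    (ℬ : Fin K → Matrix (Fin n) (Fin r) ℂ)
    (P : Fin K → Matrix (Fin u) (Fin u) ℂ)
    (hP : ∀ i, IsCPosDef (P i))
    (hLMI : ∀ i,
      IsCNegDef (Rᴴ * (B ⊗ₖ P i) * R + (ℬ i)ᴴ * Qᴴ * R + Rᴴ * Q * ℬ i))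
    (lam : Fin K → ℝ) (hlam : ∀ i, 0 ≤ lam i) (hsum : ∑ i, lam i = 1) :
    IsCPosDef (∑ i, (lam i : ℂ) • P i) ∧
    ∀ x : Fin r → ℂ, x ≠ 0 → (∑ i, (lam i : ℂ) • ℬ i).mulVec x = 0 →
      (star x ⬝ᵥ (Rᴴ * (B ⊗ₖ ∑ i, (lam i : ℂ) • P i) * R).mulVec x).re < 0 := by
  obtain ⟨j, hj⟩ := exists_pos_lam lam hlam hsum
  constructor
  · constructor
    · unfold Matrix.IsHermitian
      rw [Matrix.conjTranspose_sum]
      refine Finset.sum_congr rfl fun i _ => ?_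
      rw [Matrix.conjTranspose_smul, (hP i).1.eq]
      simp
    · intro x hx
      rw [dot_sum_smul, Complex.re_sum]
      calc (0 : ℝ) = ∑ _i : Fin K, (0 : ℝ) := by simp
        _ < ∑ i, ((lam i : ℂ) * (star x ⬝ᵥ (P i).mulVec x)).re := by
            refine Finset.sum_lt_sum (fun i _ => ?_) ⟨j, Finset.mem_univ j, ?_⟩
            · rw [Complex.re_ofReal_mul]
              exact mul_nonneg (hlam i) ((hP i).2 x hx).le
            · rw [Complex.re_ofReal_mul]
              exact mul_pos hj ((hP j).2 x hx)
  · intro x hx hnull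
    set S := ∑ i, (lam i : ℂ) • ℬ i with hS
    set M := fun i => Rᴴ * (B ⊗ₖ P i) * R + (ℬ i)ᴴ * Qᴴ * R + Rᴴ * Q * ℬ i with hM
    have hSH : Sᴴ = ∑ i, (lam i : ℂ) • (ℬ i)ᴴ := by
      rw [hS, Matrix.conjTranspose_sum]
      refine Finset.sum_congr rfl fun i _ => ?_
      rw [Matrix.conjTranspose_smul]; simp
    have hmat : ∑ i, (lam i : ℂ) • M i
        = Rᴴ * (B ⊗ₖ ∑ i, (lam i : ℂ) • P i) * R + Sᴴ * Qᴴ * R + Rᴴ * Q * S := by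
      rw [kron_sum_smul, hSH, hS]
      simp only [hM, smul_add, Finset.sum_add_distrib]
      congr 1
      · congr 1
        · rw [Matrix.mul_sum, Matrix.sum_mul]
          refine Finset.sum_congr rfl fun i _ => ?_
          rw [Matrix.mul_smul, Matrix.smul_mul]
        · rw [Matrix.sum_mul, Matrix.sum_mul]
          refine Finset.sum_congr rfl fun i _ => ?_
          rw [Matrix.smul_mul, Matrix.smul_mul]
      · rw [Matrix.mul_sum]
        refine Finset.sum_congr rfl fun i _ => ?_
        rw [Matrix.mul_smul]
    have h3 : (Rᴴ * Q * S).mulVec x = 0 := by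
      rw [← Matrix.mulVec_mulVec, hnull, Matrix.mulVec_zero]
    have h2 : star x ⬝ᵥ (Sᴴ * Qᴴ * R).mulVec x = 0 := by
      have hT : Sᴴ * Qᴴ * R = (Rᴴ * Q * S)ᴴ := by
        simp [Matrix.conjTranspose_mul, Matrix.mul_assoc]
      rw [hT, Matrix.dotProduct_mulVec, ← Matrix.star_mulVec, h3]
      simp
    have hT : Rᴴ * (B ⊗ₖ ∑ i, (lam i : ℂ) • P i) * R
        = ∑ i, (lam i : ℂ) • M i - Sᴴ * Qᴴ * R - Rᴴ * Q * S := by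
      rw [hmat]; abel
    have hval : (star x ⬝ᵥ (Rᴴ * (B ⊗ₖ ∑ i, (lam i : ℂ) • P i) * R).mulVec x)
        = ∑ i, (lam i : ℂ) * (star x ⬝ᵥ (M i).mulVec x) := by
      rw [hT, Matrix.sub_mulVec, Matrix.sub_mulVec, dotProduct_sub, dotProduct_sub,
        h2, h3, dot_sum_smul]
      simp
    rw [hval, Complex.re_sum]
    have hneg : ∀ i, (star x ⬝ᵥ (M i).mulVec x).re < 0 := by
      intro i
      have := (hLMI i).2 x hx
      rw [Matrix.neg_mulVec, dotProduct_neg, Complex.neg_re] at this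
      linarith
    calc ∑ i, ((lam i : ℂ) * (star x ⬝ᵥ (M i).mulVec x)).re
        < ∑ _i : Fin K, (0 : ℝ) := by
          refine Finset.sum_lt_sum (fun i _ => ?_) ⟨j, Finset.mem_univ j, ?_⟩
          · rw [Complex.re_ofReal_mul]
            exact mul_nonpos_of_nonneg_of_nonpos (hlam i) (hneg i).le
          · rw [Complex.re_ofReal_mul]
            exact mul_neg_of_pos_of_neg hj (hneg j)
      _ = 0 := by simp
end

section
/- (Theorem 2) Assume hypothesis H (the cited quadratic-stability lemma of Henrion et al., stated in the context). Suppose each A_i(s) has degree at most l (i.e. A_i(s) = A_0^i + A_1^i s + ⋯ + A_l^i s^l with A_t^i ∈ Matrix (Fin n) (Fin n) ℝ), and that det M ≠ 0 for every member M of MA. Let B_1(s), …, B_{2^m}(s) be the members of the vertex set K_MA (the matrices ∑_i a_i(v) • A_i for v ∈ V), with coefficient matrices ℬ_1, …, ℬ_{2^m}. If there exist a matrix Q ∈ Matrix (Fin (2nl)) (Fin n) ℂ and Hermitian positive definite matrices P_1, …, P_{2^m} ∈ Matrix (Fin (nl)) (Fin (nl)) ℂ such that for every i the Hermitian matrix Rᴴ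 (B ⊗ P_i) R + ℬ_iᴴ Qᴴ R + Rᴴ Q ℬ_i is negative definite, then every member of MA is D_B-stable; that is, MA is robustly D_B-stable. -/
open Polynomial Matrix Kronecker

/-- The LMI region associated with the Hermitian matrix `B`. -/
def DRegion (B : Matrix (Fin 2) (Fin 2) ℂ) : Set ℂ :=
  {s : ℂ | (star ![1, s] ⬝ᵥ B.mulVec ![1, s]).re < 0}

/-- A polynomial matrix is `D`-stable if its determinant is nonzero and all the
complex roots of its determinant lie in `D`. -/
def DStable {n : ℕ} (D : Set ℂ) (A : Matrix (Fin n) (Fin n) ℝ[X]) : Prop :=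
  A.det ≠ 0 ∧ ∀ z : ℂ, aeval z A.det = 0 → z ∈ D

/-- The structure matrix `R` of Definition 9: writing `x : ℂ^{(l+1)n}` in `l+1`
blocks `x_0, …, x_l` of size `n`, we have `R.mulVec x = (x_0,…,x_{l-1}; x_1,…,x_l)`. -/
noncomputable def structR (n l : ℕ) :
    Matrix (Fin 2 × Fin l × Fin n) (Fin (l + 1) × Fin n) ℂ :=
  fun p q => if (q.1 : ℕ) = (p.2.1 : ℕ) + (p.1 : ℕ) ∧ q.2 = p.2.2 then 1 else 0

/-- The coefficient matrix `𝒞 = (C_0, …, C_l)` of a polynomial matrix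
`C(s) = C_0 + C_1 s + ⋯ + C_l s^l`, with real entries regarded as complex. -/
noncomputable def coeffMat (n l : ℕ) (C : Matrix (Fin n) (Fin n) ℝ[X]) :
    Matrix (Fin n) (Fin (l + 1) × Fin n) ℂ :=
  fun i q => ((C i q.2).coeff (q.1 : ℕ) : ℂ)

section Helpers

variable {m : ℕ} {ι κ : Type*} [Fintype ι] [Fintype κ]

lemma affine_comb (a : (Fin m → ℝ) → ℝ) (k : Fin m) (p : Fin m → ℝ)
    (ha : ∃ c d : ℝ, ∀ t : ℝ, a (Function.update p k t) = c + d * t)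
    (u v x y : ℝ) (huv : u + v = 1) :
    a (Function.update p k (u * x + v * y))
      = u * a (Function.update p k x) + v * a (Function.update p k y) := by
  obtain ⟨c, d, h⟩ := ha
  rw [h, h, h]
  linear_combination (-c) * huv

lemma multiaffine_box (a : (Fin m → ℝ) → ℝ)
    (ha : ∀ (k : Fin m) (p : Fin m → ℝ), ∃ c d : ℝ, ∀ t : ℝ,
      a (Function.update p k t) = c + d * t)
    (w : Fin m → Bool → ℝ) (hw : ∀ k, w k true + w k false = 1)
    (qL qU q : Fin m → ℝ) (hq : ∀ k, q k = w k false * qL k + w k true * qU k) :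
    ∀ S : Finset (Fin m),
      (∑ ε : Fin m → Bool, (∏ k, w k (ε k)) *
        a (fun k => if k ∈ S then (if ε k then qU k else qL k) else q k)) = a q := by
  intro S
  induction S using Finset.induction_on with
  | empty =>
      simp only [Finset.notMem_empty, if_false]
      rw [← Finset.sum_mul]
      have h2 := Finset.prod_univ_sum (fun _ : Fin m => (Finset.univ : Finset Bool))
        (fun k b => w k b)
      have h1 : (∑ ε : Fin m → Bool, ∏ k, w k (ε k)) = ∏ k : Fin m, (w k true + w k false) := by
        simp only [Fintype.piFinset_univ] at h2
        rw [← h2]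
        exact Finset.prod_congr rfl fun k _ => Fintype.sum_bool _
      rw [h1]
      simp [hw]
  | @insert k₀ S' hk ih =>
      set e := Equiv.funSplitAt k₀ Bool with he
      have reindex : ∀ F : (Fin m → Bool) → ℝ,
          (∑ ε : Fin m → Bool, F ε)
            = ∑ r : ({j // j ≠ k₀} → Bool), (F (e.symm (true, r)) + F (e.symm (false, r))) := by
        intro F
        rw [← Equiv.sum_comp e.symm F, Fintype.sum_prod_type_right]
        simp [Fintype.sum_bool]
      have hsym : ∀ (b : Bool) (r : {j // j ≠ k₀} → Bool) (k : Fin m),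
          e.symm (b, r) k = if h : k = k₀ then b else r ⟨k, h⟩ := by
        intro b r k; simp [he, Equiv.funSplitAt_symm_apply]
      have hprod : ∀ (b : Bool) (r : {j // j ≠ k₀} → Bool),
          (∏ k, w k (e.symm (b, r) k))
            = w k₀ b * ∏ k ∈ ({k₀}ᶜ : Finset (Fin m)), w k (e.symm (false, r) k) := by
        intro b r
        rw [Fintype.prod_eq_mul_prod_compl k₀ (fun k => w k (e.symm (b, r) k))]
        congr 1
        · rw [hsym]; simp
        · apply Finset.prod_congr rfl
          intro k hkmem
          have hkne : k ≠ k₀ := by simpa using hkmem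
          rw [hsym, hsym, dif_neg hkne, dif_neg hkne]
      have hg : ∀ (b : Bool) (r : {j // j ≠ k₀} → Bool),
          (fun k => if k ∈ insert k₀ S' then (if e.symm (b, r) k then qU k else qL k) else q k)
            = Function.update
                (fun k => if k ∈ S' then (if e.symm (false, r) k then qU k else qL k) else q k)
                k₀ (if b then qU k₀ else qL k₀) := by
        intro b r
        funext k
        by_cases hkk : k = k₀
        · subst hkk
          rw [Function.update_self]
          simp [hsym]
        · rw [Function.update_of_ne hkk]
          by_cases hks : k ∈ S'
          · simp only [Finset.mem_insert, hks, or_true, if_true]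
            rw [hsym, hsym, dif_neg hkk, dif_neg hkk]
          · have hni : k ∉ insert k₀ S' := by simp [hkk, hks]
            simp [hni, hks]
      have hgS : ∀ (b : Bool) (r : {j // j ≠ k₀} → Bool),
          (fun k => if k ∈ S' then (if e.symm (b, r) k then qU k else qL k) else q k)
            = (fun k => if k ∈ S' then (if e.symm (false, r) k then qU k else qL k) else q k) := by
        intro b r
        funext k
        by_cases hks : k ∈ S'
        · have hkk : k ≠ k₀ := fun h => hk (h ▸ hks)
          simp only [hks, if_true]
          rw [hsym, hsym, dif_neg hkk, dif_neg hkk]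
        · simp [hks]
      rw [reindex, ← ih, reindex]
      apply Finset.sum_congr rfl
      intro r _
      have h1 : ∀ b : Bool, (∏ k, w k (e.symm (b, r) k))
          = w k₀ b * ∏ k ∈ ({k₀}ᶜ : Finset (Fin m)), w k (e.symm ((false : Bool), r) k) :=
        fun b => hprod b r
      have e1 : (if (true : Bool) then qU k₀ else qL k₀) = qU k₀ := rfl
      have e2 : (if (false : Bool) then qU k₀ else qL k₀) = qL k₀ := rfl
      rw [hg true r, hg false r, hgS true r, h1 true, h1 false, e1, e2]
      set p : Fin m → ℝ :=
        fun k => if k ∈ S' then (if e.symm ((false : Bool), r) k then qU k else qL k) else q k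
        with hp
      have hpk₀ : p k₀ = q k₀ := by simp [hp, hk]
      set C : ℝ := ∏ k ∈ ({k₀}ᶜ : Finset (Fin m)), w k (e.symm ((false : Bool), r) k) with hC
      have hupdate : a (Function.update p k₀ (w k₀ false * qL k₀ + w k₀ true * qU k₀))
          = w k₀ false * a (Function.update p k₀ (qL k₀))
            + w k₀ true * a (Function.update p k₀ (qU k₀)) := by
        apply affine_comb a k₀ p (ha k₀ p)
        linarith [hw k₀]
      have hqp : Function.update p k₀ (w k₀ false * qL k₀ + w k₀ true * qU k₀) = p := by
        rw [← hq k₀, ← hpk₀, Function.update_eq_self]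
      rw [hqp] at hupdate
      rw [hupdate]
      linear_combination (-(C * (w k₀ false * a (Function.update p k₀ (qL k₀))
        + w k₀ true * a (Function.update p k₀ (qU k₀))))) * hw k₀

lemma sum_mulVec'_s2 (s : Finset κ) (M : κ → Matrix ι ι ℂ) (x : ι → ℂ) :
    (∑ k ∈ s, M k) *ᵥ x = ∑ k ∈ s, M k *ᵥ x := by
  funext i
  simp only [Matrix.mulVec, dotProduct, Matrix.sum_apply, Finset.sum_apply, Finset.sum_mul]
  exact Finset.sum_comm

lemma dotProduct_sum' (s : Finset κ) (v : ι → ℂ) (w : κ → ι → ℂ) :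
    v ⬝ᵥ (∑ k ∈ s, w k) = ∑ k ∈ s, v ⬝ᵥ w k := by
  simp only [dotProduct, Finset.sum_apply, Finset.mul_sum]
  exact Finset.sum_comm

lemma quad_sum (c : κ → ℝ) (M : κ → Matrix ι ι ℂ) (x : ι → ℂ) :
    (star x ⬝ᵥ (∑ ε : κ, ((c ε : ℂ)) • M ε) *ᵥ x).re
      = ∑ ε : κ, c ε * (star x ⬝ᵥ (M ε) *ᵥ x).re := by
  rw [sum_mulVec'_s2, dotProduct_sum', Complex.re_sum]
  apply Finset.sum_congr rfl
  intro ε _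
  rw [smul_mulVec, dotProduct_smul, smul_eq_mul, Complex.re_ofReal_mul]

lemma convex_pos (lam r : κ → ℝ) (hnn : ∀ ε, 0 ≤ lam ε) (hsum : ∑ ε, lam ε = 1)
    (hr : ∀ ε, 0 < r ε) : 0 < ∑ ε, lam ε * r ε := by
  have hex : ∃ ε₀ : κ, 0 < lam ε₀ := by
    by_contra h
    push_neg at h
    have : ∀ ε : κ, lam ε = 0 := fun ε => le_antisymm (h ε) (hnn ε)
    simp [this] at hsum
  obtain ⟨ε₀, hε₀⟩ := hex
  calc (0 : ℝ) < lam ε₀ * r ε₀ := mul_pos hε₀ (hr ε₀)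
    _ ≤ ∑ ε, lam ε * r ε := Finset.single_le_sum
        (fun ε _ => mul_nonneg (hnn ε) (le_of_lt (hr ε))) (Finset.mem_univ ε₀)

lemma convex_neg (lam r : κ → ℝ) (hnn : ∀ ε, 0 ≤ lam ε) (hsum : ∑ ε, lam ε = 1)
    (hr : ∀ ε, r ε < 0) : ∑ ε, lam ε * r ε < 0 := by
  have := convex_pos lam (fun ε => -(r ε)) hnn hsum (fun ε => neg_pos.mpr (hr ε))
  have h2 : ∑ ε : κ, lam ε * -(r ε) = -∑ ε : κ, lam ε * r ε := by
    simp [mul_neg]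
  rw [h2] at this
  linarith

end Helpers

/-- Theorem 2: under hypothesis H (Lemma 1 of Henrion et al.), if the
vertex LMIs are feasible then the interval multilinear polynomial matrix family
`MA` is robustly `D_B`-stable. -/
theorem interval_multilinear_family_robust_DB_stable
    (m N n l : ℕ)
    (B : Matrix (Fin 2) (Fin 2) ℂ) (hB : B.IsHermitian)
    (qL qU : Fin m → ℝ) (hq : ∀ i, qL i ≤ qU i)
    (a : Fin N → (Fin m → ℝ) → ℝ)
    (ha : ∀ (i : Fin N) (k : Fin m) (q : Fin m → ℝ), ∃ c d : ℝ,
      ∀ t : ℝ, a i (Function.update q k t) = c + d * t)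
    (A : Fin N → Matrix (Fin n) (Fin n) ℝ[X])
    (hAdeg : ∀ i r s, ((A i) r s).degree ≤ l)
    (hdet : ∀ q : Fin m → ℝ, (∀ i, q i ∈ Set.Icc (qL i) (qU i)) →
      (∑ i, a i q • A i).det ≠ 0)
    -- hypothesis H: the cited quadratic-stability lemma of Henrion et al.
    (hH : ∀ C : Matrix (Fin n) (Fin n) ℝ[X],
      (∀ i j, (C i j).degree ≤ l) → C.det ≠ 0 →
      (∃ P : Matrix (Fin l × Fin n) (Fin l × Fin n) ℂ, IsCPosDef P ∧
        ∀ x : Fin (l + 1) × Fin n → ℂ, x ≠ 0 → (coeffMat n l C).mulVec x = 0 →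
          (star x ⬝ᵥ ((structR n l)ᴴ * (B ⊗ₖ P) * structR n l).mulVec x).re < 0) →
      DStable (DRegion B) C)
    -- the vertex LMI feasibility data
    (Q : Matrix (Fin 2 × Fin l × Fin n) (Fin n) ℂ)
    (P : (Fin m → Bool) → Matrix (Fin l × Fin n) (Fin l × Fin n) ℂ)
    (hP : ∀ ε, IsCPosDef (P ε))
    (hLMI : ∀ ε : Fin m → Bool,
      IsCNegDef
        ((structR n l)ᴴ * (B ⊗ₖ P ε) * structR n l
          + (coeffMat n l (∑ i, a i (fun k => if ε k then qU k else qL k) • A i))ᴴ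
              * Qᴴ * structR n l
          + (structR n l)ᴴ * Q
              * coeffMat n l (∑ i, a i (fun k => if ε k then qU k else qL k) • A i))) :
    ∀ q : Fin m → ℝ, (∀ i, q i ∈ Set.Icc (qL i) (qU i)) →
      DStable (DRegion B) (∑ i, a i q • A i) := by
  intro q hqbox
  -- construct the convex weights
  obtain ⟨w, hwnn, hw1, hq'⟩ :
      ∃ w : Fin m → Bool → ℝ, (∀ k b, 0 ≤ w k b) ∧ (∀ k, w k true + w k false = 1) ∧
        (∀ k, q k = w k false * qL k + w k true * qU k) := by
    refine ⟨fun k b =>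
      if b then (if qU k = qL k then 0 else (q k - qL k) / (qU k - qL k))
      else (1 - if qU k = qL k then 0 else (q k - qL k) / (qU k - qL k)), ?_, ?_, ?_⟩
    · intro k b
      by_cases h : qU k = qL k
      · cases b <;> simp [h]
      · have hlt : qL k < qU k := lt_of_le_of_ne (hq k) (Ne.symm h)
        have h1 : 0 ≤ (q k - qL k) / (qU k - qL k) :=
          div_nonneg (by linarith [(hqbox k).1]) (by linarith)
        have h2 : (q k - qL k) / (qU k - qL k) ≤ 1 :=
          (div_le_one (by linarith)).mpr (by linarith [(hqbox k).2])
        cases b <;> simp [h] <;> linarith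
    · intro k; simp
    · intro k
      by_cases h : qU k = qL k
      · have h1 : q k = qL k := le_antisymm (h ▸ (hqbox k).2) (hqbox k).1
        simp [h, h1]
      · have hlt : qL k < qU k := lt_of_le_of_ne (hq k) (Ne.symm h)
        have hne : qU k - qL k ≠ 0 := by intro hc; apply h; linarith
        simp only [if_neg h, if_true, if_false, Bool.false_eq_true, ite_false, ite_true]
        field_simp
        ring
  set lam : (Fin m → Bool) → ℝ := fun ε => ∏ k, w k (ε k) with hlam
  have hlamnn : ∀ ε, 0 ≤ lam ε := fun ε =>
    Finset.prod_nonneg fun k _ => hwnn k (ε k)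
  have hlamsum : (∑ ε : Fin m → Bool, lam ε) = 1 := by
    have := multiaffine_box (fun _ => (1 : ℝ))
      (fun k p => ⟨1, 0, fun t => by ring⟩) w hw1 qL qU q hq' Finset.univ
    simpa [hlam] using this
  have hAdec : ∀ i : Fin N,
      a i q = ∑ ε : Fin m → Bool, lam ε * a i (fun k => if ε k then qU k else qL k) := by
    intro i
    have := multiaffine_box (a i) (ha i) w hw1 qL qU q hq' Finset.univ
    simp only [Finset.mem_univ, if_true] at this
    exact this.symm
  -- the coefficient-matrix decomposition
  have hcoeff : coeffMat n l (∑ i, a i q • A i)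
      = ∑ ε : Fin m → Bool, ((lam ε : ℝ) : ℂ) •
          coeffMat n l (∑ i, a i (fun k => if ε k then qU k else qL k) • A i) := by
    apply Matrix.ext
    intro r p
    have hre : ((∑ i, a i q • A i) r p.2).coeff (p.1 : ℕ)
        = ∑ ε : Fin m → Bool, lam ε *
            ((∑ i, a i (fun k => if ε k then qU k else qL k) • A i) r p.2).coeff (p.1 : ℕ) := by
      simp only [Matrix.sum_apply, Matrix.smul_apply, Polynomial.finset_sum_coeff,
        Polynomial.coeff_smul, smul_eq_mul]
      calc (∑ i, a i q * (A i r p.2).coeff (p.1 : ℕ))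
          = ∑ i, (∑ ε : Fin m → Bool, lam ε * a i (fun k => if ε k then qU k else qL k))
              * (A i r p.2).coeff (p.1 : ℕ) := by
            exact Finset.sum_congr rfl fun i _ => by rw [← hAdec i]
        _ = ∑ i, ∑ ε : Fin m → Bool,
              lam ε * (a i (fun k => if ε k then qU k else qL k)
                * (A i r p.2).coeff (p.1 : ℕ)) := by
            refine Finset.sum_congr rfl fun i _ => ?_
            rw [Finset.sum_mul]
            exact Finset.sum_congr rfl fun ε _ => by ring
        _ = ∑ ε : Fin m → Bool, ∑ i,
              lam ε * (a i (fun k => if ε k then qU k else qL k)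
                * (A i r p.2).coeff (p.1 : ℕ)) := Finset.sum_comm
        _ = ∑ ε : Fin m → Bool, lam ε * ∑ i,
              a i (fun k => if ε k then qU k else qL k) * (A i r p.2).coeff (p.1 : ℕ) := by
            exact Finset.sum_congr rfl fun ε _ => by rw [Finset.mul_sum]
    show (((∑ i, a i q • A i) r p.2).coeff (p.1 : ℕ) : ℂ) = _
    rw [hre]
    simp only [Matrix.sum_apply, Matrix.smul_apply, smul_eq_mul, coeffMat]
    push_cast
    rfl
  refine hH _ ?_ (hdet q hqbox) ?_
  · -- degree bound
    intro r s
    have h1 : (∑ i, a i q • A i) r s = ∑ i, a i q • (A i r s) := by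
      simp [Matrix.sum_apply]
    rw [h1]
    refine le_trans (Polynomial.degree_sum_le _ _) ?_
    exact Finset.sup_le fun i _ => le_trans (Polynomial.degree_smul_le _ _) (hAdeg i r s)
  · -- the quadratic certificate
    refine ⟨∑ ε : Fin m → Bool, ((lam ε : ℝ) : ℂ) • P ε, ⟨?_, ?_⟩, ?_⟩
    · -- hermitian
      show (∑ ε : Fin m → Bool, ((lam ε : ℝ) : ℂ) • P ε)ᴴ = _
      rw [Matrix.conjTranspose_sum]
      refine Finset.sum_congr rfl fun ε _ => ?_
      rw [Matrix.conjTranspose_smul, Complex.star_def, Complex.conj_ofReal, (hP ε).1]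
    · -- positive definite
      intro x hx
      rw [quad_sum]
      exact convex_pos lam _ hlamnn hlamsum fun ε => (hP ε).2 x hx
    · -- main quadratic inequality
      intro x hx hCx
      have hkron : B ⊗ₖ (∑ ε : Fin m → Bool, ((lam ε : ℝ) : ℂ) • P ε)
          = ∑ ε : Fin m → Bool, ((lam ε : ℝ) : ℂ) • (B ⊗ₖ P ε) := by
        apply Matrix.ext
        intro i j
        simp only [Matrix.kroneckerMap_apply, Matrix.sum_apply, Matrix.smul_apply,
          smul_eq_mul, Finset.mul_sum]
        exact Finset.sum_congr rfl fun ε _ => by ring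
      have hmid : (structR n l)ᴴ * (B ⊗ₖ (∑ ε : Fin m → Bool, ((lam ε : ℝ) : ℂ) • P ε))
            * structR n l
          = ∑ ε : Fin m → Bool, ((lam ε : ℝ) : ℂ) •
              ((structR n l)ᴴ * (B ⊗ₖ P ε) * structR n l) := by
        rw [hkron, Matrix.mul_sum, Matrix.sum_mul]
        refine Finset.sum_congr rfl fun ε _ => ?_
        rw [Matrix.mul_smul, Matrix.smul_mul]
      have hCT : (coeffMat n l (∑ i, a i q • A i))ᴴ * Qᴴ * structR n l
          = ∑ ε : Fin m → Bool, ((lam ε : ℝ) : ℂ) •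
              ((coeffMat n l (∑ i, a i (fun k => if ε k then qU k else qL k) • A i))ᴴ
                * Qᴴ * structR n l) := by
        rw [hcoeff, Matrix.conjTranspose_sum]
        simp only [Matrix.conjTranspose_smul, Complex.star_def, Complex.conj_ofReal]
        rw [Matrix.sum_mul, Matrix.sum_mul]
        refine Finset.sum_congr rfl fun ε _ => ?_
        rw [Matrix.smul_mul, Matrix.smul_mul]
      have hQC : (structR n l)ᴴ * Q * coeffMat n l (∑ i, a i q • A i)
          = ∑ ε : Fin m → Bool, ((lam ε : ℝ) : ℂ) •
              ((structR n l)ᴴ * Q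
                * coeffMat n l (∑ i, a i (fun k => if ε k then qU k else qL k) • A i)) := by
        rw [hcoeff, Matrix.mul_sum]
        refine Finset.sum_congr rfl fun ε _ => ?_
        rw [Matrix.mul_smul]
      have hFsum : (structR n l)ᴴ * (B ⊗ₖ (∑ ε : Fin m → Bool, ((lam ε : ℝ) : ℂ) • P ε))
              * structR n l
            + (coeffMat n l (∑ i, a i q • A i))ᴴ * Qᴴ * structR n l
            + (structR n l)ᴴ * Q * coeffMat n l (∑ i, a i q • A i)
          = ∑ ε : Fin m → Bool, ((lam ε : ℝ) : ℂ) •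
              ((structR n l)ᴴ * (B ⊗ₖ P ε) * structR n l
                + (coeffMat n l (∑ i, a i (fun k => if ε k then qU k else qL k) • A i))ᴴ
                    * Qᴴ * structR n l
                + (structR n l)ᴴ * Q
                    * coeffMat n l (∑ i, a i (fun k => if ε k then qU k else qL k) • A i)) := by
        rw [hmid, hCT, hQC, ← Finset.sum_add_distrib, ← Finset.sum_add_distrib]
        exact Finset.sum_congr rfl fun ε _ => by rw [smul_add, smul_add]
      have hcross1 : star x ⬝ᵥ ((coeffMat n l (∑ i, a i q • A i))ᴴ * Qᴴ * structR n l) *ᵥ x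
          = 0 := by
        rw [Matrix.mul_assoc, ← Matrix.mulVec_mulVec, Matrix.dotProduct_mulVec,
          ← Matrix.star_mulVec, hCx]
        simp
      have hcross2 : star x ⬝ᵥ ((structR n l)ᴴ * Q * coeffMat n l (∑ i, a i q • A i)) *ᵥ x
          = 0 := by
        rw [← Matrix.mulVec_mulVec, hCx]
        simp
      have key : star x ⬝ᵥ ((structR n l)ᴴ
            * (B ⊗ₖ (∑ ε : Fin m → Bool, ((lam ε : ℝ) : ℂ) • P ε)) * structR n l) *ᵥ x
          = star x ⬝ᵥ (∑ ε : Fin m → Bool, ((lam ε : ℝ) : ℂ) •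
              ((structR n l)ᴴ * (B ⊗ₖ P ε) * structR n l
                + (coeffMat n l (∑ i, a i (fun k => if ε k then qU k else qL k) • A i))ᴴ
                    * Qᴴ * structR n l
                + (structR n l)ᴴ * Q
                    * coeffMat n l (∑ i, a i (fun k => if ε k then qU k else qL k) • A i))) *ᵥ x := by
        rw [← hFsum, Matrix.add_mulVec, Matrix.add_mulVec, dotProduct_add, dotProduct_add,
          hcross1, hcross2, add_zero, add_zero]
      show (star x ⬝ᵥ _ *ᵥ x).re < 0
      rw [key, quad_sum]
      refine convex_neg lam _ hlamnn hlamsum fun ε => ?_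
      have h := (hLMI ε).2 x hx
      rw [Matrix.neg_mulVec, dotProduct_neg, Complex.neg_re] at h
      linarith
end
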